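/- Main theorem: Let G be a connected weighted graph on n vertices with Laplacian L = (A−D)/d_max, P = Id+L with eigenvalues λ_k and orthonormal eigenvectors φ_k, and X_λ the span of eigenvectors with |λ_k| ≥ λ. Let W ⊂ V with weights a_w summing to 1. Then for all f ∈ X_λ, ℓ ∈ ℕ, 0 < λ < 1: |(1/n)Σ_{v∈V} f(v) − Σ_{w∈W} a_w f(w)| ≤ (‖f‖_{X_λ}/λ^ℓ)·(‖(Id+L)^ℓ Σ_{w∈W} a_w δ_w‖₂² − 1/n)^{1/2}. -/

import Mathlib

open Matrix Finset

theorem main_theorem_quadrature_bound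
    (n : ℕ) (hn : 0 < n)
    (A : Matrix (Fin n) (Fin n) ℝ)
    (hsymm : A.IsSymm) (hnn : ∀ i j, 0 ≤ A i j)
    (D : Matrix (Fin n) (Fin n) ℝ)
    (hD : D = Matrix.diagonal fun i => ∑ j, A i j)
    (dmax : ℝ)
    (hub : ∀ i, ∑ j, A i j ≤ dmax) (hmem : ∃ i, ∑ j, A i j = dmax)
    (hpos : 0 < dmax)
    (L : Matrix (Fin n) (Fin n) ℝ) (hL : L = dmax⁻¹ • (A - D))
    (φ : Fin n → Fin n → ℝ) (lam : Fin n → ℝ)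
    (horth : ∀ k l, ∑ i, φ k i * φ l i = if k = l then (1 : ℝ) else 0)
    (heig : ∀ k, (1 + L).mulVec (φ k) = lam k • φ k)
    (hφ1 : φ ⟨0, hn⟩ = fun _ => 1 / Real.sqrt n)
    (hlam1 : lam ⟨0, hn⟩ = 1)
    (lambda : ℝ) (hl0 : 0 < lambda) (hl1 : lambda < 1)
    (W : Finset (Fin n)) (a : Fin n → ℝ) (ha : ∑ w ∈ W, a w = 1)
    (f : Fin n → ℝ)
    (hf : f ∈ Submodule.span ℝ (φ '' {k | lambda ≤ |lam k|}))
    (ℓ : ℕ) :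
    |(1 / (n : ℝ)) * ∑ v, f v - ∑ w ∈ W, a w * f w|
      ≤ (Real.sqrt (∑ k ∈ Finset.univ.filter (fun k => lambda ≤ |lam k|),
            (∑ i, f i * φ k i) ^ 2) / lambda ^ ℓ)
        * Real.sqrt ((∑ i, (((1 + L) ^ ℓ).mulVec
            (fun v => if v ∈ W then a v else 0) i) ^ 2) - 1 / (n : ℝ)) := by
  classical
  set k0 : Fin n := ⟨0, hn⟩ with hk0
  set μ : Fin n → ℝ := (fun v => if v ∈ W then a v else 0) with hμ
  set g : Fin n → ℝ := ((1 + L) ^ ℓ).mulVec μ with hg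
  set S : Finset (Fin n) := Finset.univ.filter (fun k => lambda ≤ |lam k|) with hS
  set M : Matrix (Fin n) (Fin n) ℝ := Matrix.of φ with hM
  have hn0 : (0:ℝ) < (n:ℝ) := by exact_mod_cast hn
  have hsqn : (0:ℝ) < Real.sqrt n := Real.sqrt_pos.mpr hn0
  -- basic coefficient functions
  set c : Fin n → ℝ := fun k => ∑ i, f i * φ k i with hc
  set b : Fin n → ℝ := fun k => ∑ i, μ i * φ k i with hb
  set u : Fin n → ℝ := fun i => 1 / (n:ℝ) - μ i with hu
  set d : Fin n → ℝ := fun k => ∑ i, u i * φ k i with hd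
  -- symmetry of P = 1 + L
  have hDt : Dᵀ = D := by rw [hD]; exact Matrix.diagonal_transpose _
  have hPt : (1 + L)ᵀ = 1 + L := by
    rw [transpose_add, transpose_one, hL, transpose_smul, transpose_sub, hsymm, hDt]
  have hMt : ((1 + L) ^ ℓ)ᵀ = (1 + L) ^ ℓ := by rw [Matrix.transpose_pow, hPt]
  -- eigenvector powers
  have heigpow : ∀ (m : ℕ) k, ((1 + L) ^ m) *ᵥ (φ k) = (lam k ^ m) • φ k := by
    intro m k
    induction m with
    | zero => simp [Matrix.one_mulVec]
    | succ m ih =>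
      rw [pow_succ, ← Matrix.mulVec_mulVec, heig, Matrix.mulVec_smul, ih, smul_smul,
        ← pow_succ']
  -- completeness of the eigenbasis
  have h1 : M * Mᵀ = 1 := by
    ext k l
    simp [hM, Matrix.mul_apply, Matrix.one_apply, horth k l]
  have h2 : Mᵀ * M = 1 := mul_eq_one_comm.mp h1
  have hMv : ∀ (v : Fin n → ℝ) k, (M *ᵥ v) k = ∑ i, v i * φ k i := by
    intro v k
    simp [hM, Matrix.mulVec, dotProduct, mul_comm]
  -- Parseval (bilinear form)
  have hpars : ∀ v w : Fin n → ℝ,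
      (∑ k, (∑ i, v i * φ k i) * (∑ i, w i * φ k i)) = ∑ i, v i * w i := by
    intro v w
    have h3 : (M *ᵥ v) ⬝ᵥ (M *ᵥ w) = v ⬝ᵥ w := by
      rw [Matrix.dotProduct_mulVec, ← Matrix.mulVec_transpose, Matrix.mulVec_mulVec, h2,
        Matrix.one_mulVec]
    simpa [dotProduct, hMv] using h3
  -- coefficients of f outside S vanish
  have hcz : ∀ k, k ∉ S → c k = 0 := by
    intro k hk
    rw [hS, Finset.mem_filter] at hk
    push_neg at hk
    have hk' : ¬ lambda ≤ |lam k| := not_le.mpr (hk (Finset.mem_univ k))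
    let T : (Fin n → ℝ) →ₗ[ℝ] ℝ :=
      { toFun := fun v => ∑ i, v i * φ k i
        map_add' := by intro x y; simp [add_mul, Finset.sum_add_distrib]
        map_smul' := by intro r x; simp [Finset.mul_sum, mul_assoc]
      }
    have hsub : Submodule.span ℝ (φ '' {j | lambda ≤ |lam j|}) ≤ LinearMap.ker T := by
      rw [Submodule.span_le]
      rintro x ⟨j, hj, rfl⟩
      have hjk : j ≠ k := fun h => hk' (h ▸ hj)
      simp only [SetLike.mem_coe, LinearMap.mem_ker]
      show (∑ i, φ j i * φ k i) = 0
      rw [horth j k, if_neg hjk]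
    have := hsub hf
    rw [LinearMap.mem_ker] at this
    exact this
  -- the inner product of g with eigenvectors
  have hgφ : ∀ k, (∑ i, g i * φ k i) = lam k ^ ℓ * b k := by
    intro k
    have e0 : ((1 + L) ^ ℓ) *ᵥ μ = μ ᵥ* ((1 + L) ^ ℓ) := by
      rw [← Matrix.mulVec_transpose, hMt]
    have e1 : g ⬝ᵥ φ k = μ ⬝ᵥ (lam k ^ ℓ • φ k) := by
      rw [← heigpow ℓ k, Matrix.dotProduct_mulVec, hg, e0]
    have e2 : μ ⬝ᵥ (lam k ^ ℓ • φ k) = lam k ^ ℓ * (μ ⬝ᵥ φ k) := by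
      rw [dotProduct_smul, smul_eq_mul]
    exact e1.trans e2
  -- sum of μ is 1
  have hμsum : ∑ i, μ i = 1 := by
    simp only [hμ]
    rw [Finset.sum_ite_mem, Finset.univ_inter]
    exact ha
  -- b k0 = 1/√n
  have hbk0 : b k0 = 1 / Real.sqrt n := by
    rw [hb]
    simp only [hφ1]
    rw [← Finset.sum_mul, hμsum, one_mul]
  -- for k ≠ k0, the sum of φ k vanishes
  have hφsum : ∀ k, k ≠ k0 → (∑ i, φ k i) = 0 := by
    intro k hk
    have h0 := horth k0 k
    rw [if_neg (fun h => hk h.symm)] at h0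
    simp only [hφ1] at h0
    rw [← Finset.mul_sum] at h0
    rcases mul_eq_zero.mp h0 with h | h
    · exact absurd h (one_div_ne_zero (ne_of_gt hsqn))
    · exact h
  -- d k0 = 0 and d k = -b k for k ≠ k0
  have hdsplit : ∀ k, d k = (∑ i, (1/(n:ℝ)) * φ k i) - b k := by
    intro k
    rw [hd, hb]
    simp only [hu, sub_mul]
    rw [Finset.sum_sub_distrib]
  have hdk0 : d k0 = 0 := by
    rw [hdsplit, hbk0]
    simp only [hφ1]
    rw [← Finset.mul_sum, Finset.sum_const, Finset.card_univ, Fintype.card_fin, nsmul_eq_mul]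
    field_simp
    ring
  have hdk : ∀ k, k ≠ k0 → d k = - b k := by
    intro k hk
    rw [hdsplit, ← Finset.mul_sum, hφsum k hk, mul_zero, zero_sub]
  -- LHS as inner product with u
  have hmuf : ∑ i, μ i * f i = ∑ w ∈ W, a w * f w := by
    simp only [hμ, ite_mul, zero_mul]
    rw [Finset.sum_ite_mem, Finset.univ_inter]
  have hLHS : (1 / (n : ℝ)) * ∑ v, f v - ∑ w ∈ W, a w * f w = ∑ i, f i * u i := by
    simp only [hu, mul_sub]
    rw [Finset.sum_sub_distrib, ← hmuf, Finset.mul_sum]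
    congr 1
    · exact Finset.sum_congr rfl fun i _ => mul_comm _ _
    · exact Finset.sum_congr rfl fun i _ => mul_comm _ _
  -- expansion of the LHS in eigencoefficients
  have hexp : ∑ i, f i * u i = ∑ k ∈ S, c k * d k := by
    rw [← hpars f u]
    exact (Finset.sum_subset (Finset.filter_subset _ _)
      (fun k _ hk => by rw [show (∑ i, f i * φ k i) = c k from rfl, hcz k hk, zero_mul])).symm
  -- norm of g via Parseval
  have hgnorm : ∑ i, (g i)^2 = ∑ k, (lam k ^ ℓ * b k)^2 := by
    have hpg := hpars g g
    simp only [hgφ] at hpg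
    calc ∑ i, (g i)^2 = ∑ i, g i * g i := by simp [sq]
      _ = ∑ k, (lam k ^ ℓ * b k) * (lam k ^ ℓ * b k) := hpg.symm
      _ = ∑ k, (lam k ^ ℓ * b k)^2 := by simp [sq]
  have hk0term : (lam k0 ^ ℓ * b k0)^2 = 1 / (n:ℝ) := by
    rw [hlam1, hbk0, one_pow, one_mul, div_pow, one_pow, Real.sq_sqrt hn0.le]
  have hgsub : (∑ i, (g i)^2) - 1/(n:ℝ) = ∑ k ∈ Finset.univ.erase k0, (lam k ^ ℓ * b k)^2 := by
    rw [hgnorm, ← Finset.add_sum_erase _ _ (Finset.mem_univ k0), hk0term]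
    ring
  have hgsub_nonneg : 0 ≤ (∑ i, (g i)^2) - 1/(n:ℝ) := by
    rw [hgsub]
    exact Finset.sum_nonneg fun k _ => sq_nonneg _
  -- key bound on ∑_S d²
  have hkey : lambda ^ (2*ℓ) * (∑ k ∈ S, d k ^ 2) ≤ (∑ i, (g i)^2) - 1/(n:ℝ) := by
    rw [hgsub]
    have e1 : ∑ k ∈ S, d k ^ 2 = ∑ k ∈ S.erase k0, d k ^ 2 := by
      by_cases h : k0 ∈ S
      · rw [← Finset.add_sum_erase _ _ h, hdk0]; ring
      · rw [Finset.erase_eq_of_notMem h]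
    rw [e1, Finset.mul_sum]
    have step : ∀ k ∈ S.erase k0, lambda ^ (2*ℓ) * d k ^ 2 ≤ (lam k ^ ℓ * b k)^2 := by
      intro k hk
      rw [Finset.mem_erase] at hk
      obtain ⟨hkne, hkS⟩ := hk
      rw [hS, Finset.mem_filter] at hkS
      have hlk : lambda ≤ |lam k| := hkS.2
      rw [hdk k hkne, neg_sq]
      have h3 : lambda ^ (2*ℓ) ≤ (lam k ^ ℓ)^2 := by
        have h4 : lambda ^ ℓ ≤ |lam k| ^ ℓ := pow_le_pow_left₀ hl0.le hlk ℓ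
        calc lambda ^ (2*ℓ) = (lambda ^ ℓ)^2 := by rw [← pow_mul, mul_comm]
          _ ≤ (|lam k| ^ ℓ)^2 := by
              apply pow_le_pow_left₀ (by positivity) h4
          _ = (lam k ^ ℓ)^2 := by rw [← abs_pow, sq_abs]
      calc lambda ^ (2*ℓ) * b k ^ 2 ≤ (lam k ^ ℓ)^2 * b k ^ 2 :=
            mul_le_mul_of_nonneg_right h3 (sq_nonneg _)
        _ = (lam k ^ ℓ * b k)^2 := by ring
    calc ∑ k ∈ S.erase k0, lambda ^ (2*ℓ) * d k ^ 2
        ≤ ∑ k ∈ S.erase k0, (lam k ^ ℓ * b k)^2 := Finset.sum_le_sum step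
      _ ≤ ∑ k ∈ Finset.univ.erase k0, (lam k ^ ℓ * b k)^2 :=
          Finset.sum_le_sum_of_subset_of_nonneg
            (Finset.erase_subset_erase _ (Finset.subset_univ S))
            (fun k _ _ => sq_nonneg _)
  -- from hkey: √(∑_S d²) ≤ √(‖g‖² − 1/n)/λ^ℓ
  have hlpow : (0:ℝ) < lambda ^ ℓ := pow_pos hl0 ℓ
  have hdbound : Real.sqrt (∑ k ∈ S, d k ^ 2)
      ≤ Real.sqrt ((∑ i, (g i)^2) - 1/(n:ℝ)) / lambda ^ ℓ := by
    rw [← Real.sqrt_sq hlpow.le, ← Real.sqrt_div hgsub_nonneg]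
    apply Real.sqrt_le_sqrt
    rw [le_div_iff₀ (by positivity)]
    calc (∑ k ∈ S, d k ^ 2) * (lambda ^ ℓ)^2
        = lambda ^ (2*ℓ) * (∑ k ∈ S, d k ^ 2) := by rw [← pow_mul, mul_comm (2:ℕ) ℓ]; ring
      _ ≤ _ := hkey
  -- Cauchy–Schwarz
  have hCS : |∑ k ∈ S, c k * d k|
      ≤ Real.sqrt (∑ k ∈ S, c k ^ 2) * Real.sqrt (∑ k ∈ S, d k ^ 2) := by
    rw [abs_le]
    constructor
    · have h2' := Real.sum_mul_le_sqrt_mul_sqrt S c fun k => -(d k)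
      simp only [mul_neg, Finset.sum_neg_distrib, neg_sq] at h2'
      linarith
    · exact Real.sum_mul_le_sqrt_mul_sqrt S c d
  -- assemble
  rw [hLHS, hexp]
  calc |∑ k ∈ S, c k * d k|
      ≤ Real.sqrt (∑ k ∈ S, c k ^ 2) * Real.sqrt (∑ k ∈ S, d k ^ 2) := hCS
    _ ≤ Real.sqrt (∑ k ∈ S, c k ^ 2) *
        (Real.sqrt ((∑ i, (g i)^2) - 1/(n:ℝ)) / lambda ^ ℓ) :=
          mul_le_mul_of_nonneg_left hdbound (Real.sqrt_nonneg _)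
    _ = (Real.sqrt (∑ k ∈ S, c k ^ 2) / lambda ^ ℓ) *
        Real.sqrt ((∑ i, (g i)^2) - 1/(n:ℝ)) := by ring
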